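/- If a graph has exactly two distinct adjacency eigenvalues, then it is a disjoint union of complete graphs of a fixed order (with at least one edge). -/

import Mathlib

/-- If a graph has exactly two distinct adjacency eigenvalues, then it is a disjoint
union of complete graphs of a fixed order `r ≥ 2`: every vertex has degree `r - 1` and
any two distinct vertices in the same connected component are adjacent (so every
component is a complete graph `K_r`). -/
theorem two_distinct_eigenvalues_union_complete (n : ℕ) (G : SimpleGraph (Fin n))
    [DecidableRel G.Adj] (hA : (G.adjMatrix ℝ).IsHermitian)
    (h2 : (Finset.univ.image hA.eigenvalues).card = 2) :
    ∃ r : ℕ, 2 ≤ r ∧ (∀ v, G.degree v = r - 1) ∧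
      ∀ u v, G.Reachable u v → u = v ∨ G.Adj u v := by
  classical
  set A : Matrix (Fin n) (Fin n) ℝ := G.adjMatrix ℝ with hAdef
  obtain ⟨a, b, hab, hs⟩ := Finset.card_eq_two.mp h2
  have hev : ∀ i, hA.eigenvalues i = a ∨ hA.eigenvalues i = b := by
    intro i
    have hmem : hA.eigenvalues i ∈ ({a, b} : Finset ℝ) :=
      hs ▸ Finset.mem_image_of_mem _ (Finset.mem_univ i)
    simpa using hmem
  -- nonemptiness
  have hn : 0 < n := by
    have hne : (Finset.univ.image hA.eigenvalues).Nonempty :=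
      Finset.card_pos.mp (by rw [h2]; norm_num)
    obtain ⟨x, hx⟩ := hne
    obtain ⟨i, _, _⟩ := Finset.mem_image.mp hx
    exact Fin.pos_iff_nonempty.mpr ⟨i⟩
  set U : Matrix (Fin n) (Fin n) ℝ := (hA.eigenvectorUnitary : Matrix (Fin n) (Fin n) ℝ) with hUdef
  set D : Matrix (Fin n) (Fin n) ℝ :=
    Matrix.diagonal (RCLike.ofReal ∘ hA.eigenvalues) with hDdef
  have hsp : A = U * D * star U := hA.spectral_theorem
  have hU1 : star U * U = 1 := Unitary.coe_star_mul_self _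
  have hU2 : U * star U = 1 := Unitary.coe_mul_star_self _
  have conj_mul : ∀ X Y : Matrix (Fin n) (Fin n) ℝ,
      (U * X * star U) * (U * Y * star U) = U * (X * Y) * star U := by
    intro X Y
    simp only [Matrix.mul_assoc]
    rw [← Matrix.mul_assoc (star U) U (Y * star U), hU1, Matrix.one_mul]
  have e1 : A * A = U * (D * D) * star U := by
    rw [hsp]; exact conj_mul D D
  have hDD : D * D + (a * b) • (1 : Matrix (Fin n) (Fin n) ℝ) = (a + b) • D := by
    rw [hDdef, Matrix.diagonal_mul_diagonal, Matrix.smul_one_eq_diagonal]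
    ext i j
    rcases eq_or_ne i j with rfl | hij
    · rcases hev i with h | h <;>
        simp [Matrix.add_apply, Matrix.smul_apply, Matrix.diagonal_apply_eq,
          Function.comp, h] <;> ring
    · simp [Matrix.add_apply, Matrix.smul_apply, Matrix.diagonal_apply_ne _ hij]
  have key : A * A + (a * b) • (1 : Matrix (Fin n) (Fin n) ℝ) = (a + b) • A := by
    calc A * A + (a * b) • (1 : Matrix (Fin n) (Fin n) ℝ)
        = U * (D * D) * star U + (a * b) • (U * 1 * star U) := by
          rw [e1, Matrix.mul_one, hU2]
      _ = U * (D * D + (a * b) • 1) * star U := by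
          rw [Matrix.mul_add, Matrix.add_mul, Matrix.mul_smul, Matrix.smul_mul]
      _ = U * ((a + b) • D) * star U := by rw [hDD]
      _ = (a + b) • A := by rw [Matrix.mul_smul, Matrix.smul_mul, hsp]
  have keyapp : ∀ u v, (A * A) u v + (a * b) * (if u = v then (1:ℝ) else 0)
      = (a + b) * A u v := by
    intro u v
    have := congrFun (congrFun key u) v
    simpa [Matrix.one_apply, Matrix.add_apply, Matrix.smul_apply, mul_comm] using this
  -- constant degree
  have hdeg : ∀ v, (G.degree v : ℝ) = -(a * b) := by
    intro v
    have h := keyapp v v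
    rw [if_pos rfl, mul_one] at h
    have h1 : (A * A) v v = (G.degree v : ℝ) := by
      exact G.adjMatrix_mul_self_apply_self v
    have h2' : A v v = 0 := by simp [hAdef]
    rw [h1, h2'] at h
    linarith
  -- non-adjacent distinct vertices have no common neighbor
  have hcommon : ∀ u v w, u ≠ v → ¬ G.Adj u v → ¬ (G.Adj u w ∧ G.Adj w v) := by
    intro u v w huv hnadj ⟨h1', h2'⟩
    have hAuv : A u v = 0 := by simp [hAdef, hnadj]
    have h0 : (A * A) u v = 0 := by
      have h := keyapp u v
      rw [if_neg huv, mul_zero, add_zero, hAuv, mul_zero] at h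
      exact h
    rw [Matrix.mul_apply] at h0
    have hterm : A u w * A w v = 0 := by
      refine (Finset.sum_eq_zero_iff_of_nonneg ?_).mp h0 w (Finset.mem_univ w)
      intro x _
      have h1 : (0:ℝ) ≤ A u x := by simp [hAdef, SimpleGraph.adjMatrix_apply]; positivity
      have h2 : (0:ℝ) ≤ A x v := by simp [hAdef, SimpleGraph.adjMatrix_apply]; positivity
      positivity
    rw [hAdef] at hterm
    simp [SimpleGraph.adjMatrix_apply, h1', h2'] at hterm
  -- components are complete
  have htrans : ∀ u v, G.Reachable u v → u = v ∨ G.Adj u v := by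
    intro u v hr
    obtain ⟨p⟩ := hr
    induction p with
    | nil => exact Or.inl rfl
    | @cons x y z hxy q ih =>
      rcases ih with rfl | hadj
      · exact Or.inr hxy
      · rcases eq_or_ne x z with rfl | hxz
        · exact Or.inl rfl
        · by_contra hc
          push_neg at hc
          exact hcommon x z y hxz hc.2 ⟨hxy, hadj⟩
  set v₀ : Fin n := ⟨0, hn⟩
  have hreg : ∀ v, G.degree v = G.degree v₀ := by
    intro v
    have : ((G.degree v : ℝ)) = (G.degree v₀ : ℝ) := by rw [hdeg, hdeg]
    exact_mod_cast this
  refine ⟨G.degree v₀ + 1, ?_, fun v => by rw [hreg v]; simp, htrans⟩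
  -- degree is at least 1
  by_contra hlt
  push_neg at hlt
  have hd0 : G.degree v₀ = 0 := by omega
  have hnoadj : ∀ u v : Fin n, ¬ G.Adj u v := by
    intro u v huv
    have : v ∈ G.neighborFinset u := by simpa [SimpleGraph.mem_neighborFinset] using huv
    have := Finset.card_pos.mpr ⟨v, this⟩
    rw [← SimpleGraph.degree, hreg u, hd0] at this
    omega
  have hA0 : A = 0 := by
    ext u v
    simp [hAdef, SimpleGraph.adjMatrix_apply, hnoadj u v]
  have hDzero : D = 0 := by
    have h : star U * A * U = D := by
      rw [hsp]; simp only [Matrix.mul_assoc]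
      rw [hU1, Matrix.mul_one, ← Matrix.mul_assoc, hU1, Matrix.one_mul]
    have hc : star (hA.eigenvectorUnitary : Matrix (Fin n) (Fin n) ℝ) * A *
        (hA.eigenvectorUnitary : Matrix (Fin n) (Fin n) ℝ) = 0 := by
      have := congrArg (fun X : Matrix (Fin n) (Fin n) ℝ =>
        star (hA.eigenvectorUnitary : Matrix (Fin n) (Fin n) ℝ) * X *
        (hA.eigenvectorUnitary : Matrix (Fin n) (Fin n) ℝ)) hA0
      simpa using this
    rw [hDdef]
    exact h.symm.trans hc
  have hevz : ∀ i, hA.eigenvalues i = 0 := by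
    intro i
    have := congrFun (congrFun hDzero i) i
    simpa [hDdef, Matrix.diagonal_apply_eq] using this
  have ha0 : a = 0 := by
    have : a ∈ Finset.univ.image hA.eigenvalues := by rw [hs]; simp
    obtain ⟨i, _, hi⟩ := Finset.mem_image.mp this
    rw [← hi, hevz i]
  have hb0 : b = 0 := by
    have : b ∈ Finset.univ.image hA.eigenvalues := by rw [hs]; simp
    obtain ⟨i, _, hi⟩ := Finset.mem_image.mp this
    rw [← hi, hevz i]
  exact hab (ha0.trans hb0.symm)
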